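/- Let ψ : ℕ → [0,1/2] and let m ≠ n be positive integers. In the random model, E[λ(E_m^Q ∩ E_n^Q)] = p_m · p_n · λ(E_m^S ∩ E_n^S), where E denotes expectation over the random choice of P. -/

import Mathlib

open MeasureTheory ProbabilityTheory Filter Set

noncomputable section

/-- The approximation set `⋃_{a ∈ A} ((a-ψ(n))/n, (a+ψ(n))/n)`. -/
def approxSet (A : Set ℕ) (ψ : ℕ → ℝ) (n : ℕ) : Set ℝ :=
  ⋃ a ∈ A, Set.Ioo (((a : ℝ) - ψ n) / n) (((a : ℝ) + ψ n) / n)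

/-- The set of partially reduced numerators: `a ∈ {1,…,n}` with `gcd(a,n) ≤ (log n)^{ε/2}`. -/
def Sred (ε : ℝ) (n : ℕ) : Set ℕ :=
  {a | 1 ≤ a ∧ a ≤ n ∧ (Nat.gcd a n : ℝ) ≤ Real.log n ^ (ε / 2)}

/-- The basic interval. -/
def bInt (ψ : ℕ → ℝ) (n a : ℕ) : Set ℝ :=
  Set.Ioo (((a : ℝ) - ψ n) / n) (((a : ℝ) + ψ n) / n)

lemma bInt_disjoint {ψ : ℕ → ℝ} (hψ : ∀ k, ψ k ∈ Set.Icc (0 : ℝ) (1 / 2))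
    {n a b : ℕ} (hab : a ≠ b) : Disjoint (bInt ψ n a) (bInt ψ n b) := by
  rcases eq_or_ne (n : ℝ) 0 with hn | hn
  · simp [bInt, hn, Set.Ioo_self, disjoint_bot_left]
  have hnpos : (0 : ℝ) < n := lt_of_le_of_ne (Nat.cast_nonneg n) (Ne.symm hn)
  have key : ∀ a b : ℕ, a < b →
      Disjoint (bInt ψ n a) (bInt ψ n b) := by
    intro a b hab
    rw [bInt, bInt, Set.Ioo_disjoint_Ioo]
    have hab' : (a : ℝ) + 1 ≤ b := by exact_mod_cast hab
    have h1 : ((a : ℝ) + ψ n) / n ≤ ((b : ℝ) - ψ n) / n := by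
      apply div_le_div_of_nonneg_right _ hnpos.le
      linarith [(hψ n).2]
    calc min (((a : ℝ) + ψ n) / n) (((b : ℝ) + ψ n) / n) ≤ ((a : ℝ) + ψ n) / n :=
          min_le_left _ _
      _ ≤ ((b : ℝ) - ψ n) / n := h1
      _ ≤ max (((a : ℝ) - ψ n) / n) (((b : ℝ) - ψ n) / n) := le_max_right _ _
  rcases lt_or_gt_of_ne hab with h | h
  · exact key a b h
  · exact (key b a h).symm

lemma approxSet_inter (A B : Set ℕ) (ψ : ℕ → ℝ) (m n : ℕ) :
    approxSet A ψ m ∩ approxSet B ψ n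
      = ⋃ q ∈ A ×ˢ B, (bInt ψ m q.1 ∩ bInt ψ n q.2) := by
  ext x
  simp only [approxSet, bInt, Set.mem_inter_iff, Set.mem_iUnion, Set.mem_prod, Prod.exists]
  aesop

lemma measure_approxSet_inter {ψ : ℕ → ℝ} (hψ : ∀ k, ψ k ∈ Set.Icc (0 : ℝ) (1 / 2))
    (A B : Set ℕ) {m n : ℕ} (hmn : m ≠ n) :
    volume (approxSet A ψ m ∩ approxSet B ψ n)
      = ∑' q : ℕ × ℕ, Set.indicator (A ×ˢ B)
          (fun q => volume (bInt ψ m q.1 ∩ bInt ψ n q.2)) q := by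
  rw [approxSet_inter, measure_biUnion ((Set.countable_univ (α := ℕ × ℕ)).mono
      (Set.subset_univ _))]
  · exact tsum_subtype (A ×ˢ B) (fun q => volume (bInt ψ m q.1 ∩ bInt ψ n q.2))
  · intro q hq r hr hqr
    by_cases h1 : q.1 = r.1
    · have h2 : q.2 ≠ r.2 := fun h => hqr (Prod.ext h1 h)
      exact (Disjoint.mono inter_subset_right inter_subset_right (bInt_disjoint hψ h2))
    · exact (Disjoint.mono inter_subset_left inter_subset_left (bInt_disjoint hψ h1))
  · intro q _
    exact (measurableSet_Ioo.inter measurableSet_Ioo)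

/-- For `m ≠ n`, the expected overlap satisfies
`E[λ(E_m^Q ∩ E_n^Q)] = pₘ pₙ λ(E_m^S ∩ E_n^S)`. -/
theorem stmt6
    {Ω : Type*} [MeasurableSpace Ω] (μ : Measure Ω) [IsProbabilityMeasure μ]
    (ε : ℝ) (hε : ε ∈ Set.Ioo (0 : ℝ) 1)
    (p : ℕ → ℝ) (hp : ∀ n, p n ∈ Set.Icc (0 : ℝ) 1)
    (P : Ω → ℕ → Set ℕ)
    (hPsub : ∀ ω n, P ω n ⊆ Set.Icc 1 n)
    (hPmeas : ∀ n a : ℕ, MeasurableSet {ω | a ∈ P ω n})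
    (hPprob : ∀ n a : ℕ, 1 ≤ a → a ≤ n → μ {ω | a ∈ P ω n} = ENNReal.ofReal (p n))
    (hPindep : iIndepSet (fun q : ℕ × ℕ => {ω | q.2 ∈ P ω q.1}) μ)
    (ψ : ℕ → ℝ) (hψ : ∀ k, ψ k ∈ Set.Icc (0 : ℝ) (1 / 2))
    (m n : ℕ) (hm : 0 < m) (hn : 0 < n) (hmn : m ≠ n) :
    ∫⁻ ω, volume (approxSet (P ω m ∩ Sred ε m) ψ m ∩ approxSet (P ω n ∩ Sred ε n) ψ n) ∂μ
      = ENNReal.ofReal (p m) * ENNReal.ofReal (p n) *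
        volume (approxSet (Sred ε m) ψ m ∩ approxSet (Sred ε n) ψ n) := by
  classical
  set g : ℕ × ℕ → ENNReal := fun q => volume (bInt ψ m q.1 ∩ bInt ψ n q.2) with hg
  set c : ℕ × ℕ → ENNReal := fun q => Set.indicator (Sred ε m ×ˢ Sred ε n) g q with hc
  -- pointwise rewrite of the integrand
  have hpt : ∀ ω, volume (approxSet (P ω m ∩ Sred ε m) ψ m ∩ approxSet (P ω n ∩ Sred ε n) ψ n)
      = ∑' q : ℕ × ℕ,
          Set.indicator ({ω' | q.1 ∈ P ω' m} ∩ {ω' | q.2 ∈ P ω' n}) (fun _ => c q) ω := by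
    intro ω
    rw [measure_approxSet_inter hψ _ _ hmn]
    congr 1
    funext q
    by_cases h1 : q.1 ∈ P ω m <;> by_cases h2 : q.2 ∈ P ω n <;>
      by_cases h3 : q.1 ∈ Sred ε m <;> by_cases h4 : q.2 ∈ Sred ε n <;>
      simp [Set.indicator_apply, hc, hg, Set.mem_prod, h1, h2, h3, h4]
  simp_rw [hpt]
  rw [lintegral_tsum (f := fun (q : ℕ × ℕ) ω =>
      Set.indicator ({ω' | q.1 ∈ P ω' m} ∩ {ω' | q.2 ∈ P ω' n}) (fun _ => c q) ω)
      (fun q => (measurable_const.indicator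
      ((hPmeas m q.1).inter (hPmeas n q.2))).aemeasurable)]
  have hterm : ∀ q : ℕ × ℕ,
      ∫⁻ ω, Set.indicator ({ω' | q.1 ∈ P ω' m} ∩ {ω' | q.2 ∈ P ω' n}) (fun _ => c q) ω ∂μ
        = ENNReal.ofReal (p m) * ENNReal.ofReal (p n) * c q := by
    intro q
    rw [lintegral_indicator_const ((hPmeas m q.1).inter (hPmeas n q.2))]
    by_cases h3 : q ∈ Sred ε m ×ˢ Sred ε n
    · have hμ : μ ({ω' | q.1 ∈ P ω' m} ∩ {ω' | q.2 ∈ P ω' n})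
          = ENNReal.ofReal (p m) * ENNReal.ofReal (p n) := by
        have hne : ((m, q.1) : ℕ × ℕ) ≠ (n, q.2) := by
          simp [Prod.ext_iff, hmn]
        have := hPindep.meas_biInter ({(m, q.1), (n, q.2)} : Finset (ℕ × ℕ))
        rw [Finset.set_biInter_insert, Finset.set_biInter_singleton,
            Finset.prod_insert (by simpa using hne), Finset.prod_singleton] at this
        simp only at this
        rw [this, hPprob m q.1 h3.1.1 h3.1.2.1, hPprob n q.2 h3.2.1 h3.2.2.1]
      rw [hμ]; ring
    · simp [hc, Set.indicator_of_notMem h3]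
  simp_rw [hterm]
  rw [ENNReal.tsum_mul_left, measure_approxSet_inter hψ _ _ hmn]
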